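/- Two-row hafnian expansion: for a symmetric 2n×2n matrix A over a commutative ring with zero diagonal and any two distinct indices i, j, hf(A) = a_{ij}·hf(A[i,j]) + Σ_{{p,q}: p,q ∉ {i,j}, p ≠ q} (a_{ip}a_{jq} + a_{iq}a_{jp})·hf(A[i,j,p,q]), where the sum is over unordered pairs {p,q}. -/

import Mathlib

/-- The hafnian of a square matrix: the sum over all perfect matchings of the index
set (encoded as fixed-point-free involutions `σ`) of the product of the entries
`A i (σ i)` over the edges `{i, σ i}` of the matching (taking `i < σ i`). -/
def Matrix.hafnian {m : ℕ} {R : Type*} [CommRing R] (A : Matrix (Fin m) (Fin m) R) : R :=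
  ∑ σ ∈ Finset.univ.filter (fun σ : Equiv.Perm (Fin m) => σ * σ = 1 ∧ ∀ i, σ i ≠ i),
    ∏ i ∈ Finset.univ.filter (fun i => i < σ i), A i (σ i)

/-- The principal submatrix of `A` obtained by deleting the rows and columns indexed
by `s` (remaining indices kept in increasing order); junk value if the cardinality
does not match. -/
def Matrix.delPrincipal {m k : ℕ} {R : Type*} [CommRing R] (A : Matrix (Fin m) (Fin m) R)
    (s : Finset (Fin m)) : Matrix (Fin k) (Fin k) R :=
  if h : sᶜ.card = k then
    A.submatrix (fun a => (sᶜ.orderIsoOfFin h a : Fin m))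
      (fun b => (sᶜ.orderIsoOfFin h b : Fin m))
  else 0

namespace HafAux

open Finset Equiv

variable {m k : ℕ}

/-- The enumeration of the complement of `{i,j}`. -/
def cEq (i j : Fin m) (hs : (({i,j} : Finset (Fin m))ᶜ).card = k) :
    Fin k ≃ {x : Fin m // x ∈ (({i,j} : Finset (Fin m))ᶜ)} :=
  ((({i,j} : Finset (Fin m))ᶜ).orderIsoOfFin hs).toEquiv

/-- Extend a permutation of the complement of `{i,j}` to a permutation swapping `i,j`. -/
def gext (i j : Fin m) (hs : (({i,j} : Finset (Fin m))ᶜ).card = k)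
    (τ : Equiv.Perm (Fin k)) : Equiv.Perm (Fin m) :=
  Equiv.swap i j * τ.extendDomain (cEq i j hs)

lemma gext_apply_i (i j : Fin m) (hs : (({i,j} : Finset (Fin m))ᶜ).card = k)
    (τ : Equiv.Perm (Fin k)) : gext i j hs τ i = j := by
  have hi : i ∉ (({i,j} : Finset (Fin m))ᶜ) := by simp
  simp [gext, Equiv.Perm.mul_apply, τ.extendDomain_apply_not_subtype _ hi]

lemma gext_apply_j (i j : Fin m) (hs : (({i,j} : Finset (Fin m))ᶜ).card = k)
    (τ : Equiv.Perm (Fin k)) : gext i j hs τ j = i := by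
  have hj : j ∉ (({i,j} : Finset (Fin m))ᶜ) := by simp
  simp [gext, Equiv.Perm.mul_apply, τ.extendDomain_apply_not_subtype _ hj]

lemma gext_apply_mem (i j : Fin m) (hs : (({i,j} : Finset (Fin m))ᶜ).card = k)
    (τ : Equiv.Perm (Fin k)) {x : Fin m} (hx : x ∈ (({i,j} : Finset (Fin m))ᶜ)) :
    gext i j hs τ x = (cEq i j hs (τ ((cEq i j hs).symm ⟨x, hx⟩)) : Fin m) := by
  have h1 : τ.extendDomain (cEq i j hs) x
      = (cEq i j hs (τ ((cEq i j hs).symm ⟨x, hx⟩)) : Fin m) :=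
    τ.extendDomain_apply_subtype _ hx
  have hmem : ((cEq i j hs (τ ((cEq i j hs).symm ⟨x, hx⟩))) : Fin m)
      ∈ (({i,j} : Finset (Fin m))ᶜ) := (cEq i j hs _).2
  have hni : ((cEq i j hs (τ ((cEq i j hs).symm ⟨x, hx⟩))) : Fin m) ≠ i := by
    intro h; rw [h] at hmem; simp at hmem
  have hnj : ((cEq i j hs (τ ((cEq i j hs).symm ⟨x, hx⟩))) : Fin m) ≠ j := by
    intro h; rw [h] at hmem; simp at hmem
  simp [gext, Equiv.Perm.mul_apply, h1, Equiv.swap_apply_of_ne_of_ne hni hnj]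

lemma invol_apply {α : Type*} {σ : Equiv.Perm α} (h : σ * σ = 1) (x : α) : σ (σ x) = x := by
  have := Equiv.ext_iff.1 h x
  simpa [Equiv.Perm.mul_apply] using this

lemma gext_mem (i j : Fin m) (hs : (({i,j} : Finset (Fin m))ᶜ).card = k)
    (τ : Equiv.Perm (Fin k)) {x : Fin m} (hx : x ∈ (({i,j} : Finset (Fin m))ᶜ)) :
    gext i j hs τ x ∈ (({i,j} : Finset (Fin m))ᶜ) := by
  rw [gext_apply_mem i j hs τ hx]; exact (cEq i j hs _).2

lemma cEq_symm_coe (i j : Fin m) (hs : (({i,j} : Finset (Fin m))ᶜ).card = k)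
    (b : Fin k) : (cEq i j hs).symm ⟨(cEq i j hs b : Fin m), (cEq i j hs b).2⟩ = b := by
  have : (⟨(cEq i j hs b : Fin m), (cEq i j hs b).2⟩ :
      {x : Fin m // x ∈ (({i,j} : Finset (Fin m))ᶜ)}) = cEq i j hs b := rfl
  rw [this, Equiv.symm_apply_apply]

lemma gext_invol (i j : Fin m) (hij : i ≠ j) (hs : (({i,j} : Finset (Fin m))ᶜ).card = k)
    {τ : Equiv.Perm (Fin k)} (hτ : τ * τ = 1) : gext i j hs τ * gext i j hs τ = 1 := by
  ext x
  simp only [Equiv.Perm.mul_apply, Equiv.Perm.one_apply]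
  by_cases hxi : x = i
  · subst hxi; rw [gext_apply_i, gext_apply_j]
  by_cases hxj : x = j
  · subst hxj; rw [gext_apply_j, gext_apply_i]
  have hx : x ∈ (({i,j} : Finset (Fin m))ᶜ) := by simp [hxi, hxj]
  rw [gext_apply_mem i j hs τ hx, gext_apply_mem i j hs τ (cEq i j hs _).2]
  rw [cEq_symm_coe, invol_apply hτ]
  have := (cEq i j hs).apply_symm_apply ⟨x, hx⟩
  simpa using congrArg Subtype.val this

lemma gext_fpf (i j : Fin m) (hij : i ≠ j) (hs : (({i,j} : Finset (Fin m))ᶜ).card = k)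
    {τ : Equiv.Perm (Fin k)} (hτ : ∀ a, τ a ≠ a) : ∀ x, gext i j hs τ x ≠ x := by
  intro x
  by_cases hxi : x = i
  · subst hxi; rw [gext_apply_i]; exact Ne.symm hij
  by_cases hxj : x = j
  · subst hxj; rw [gext_apply_j]; exact hij
  have hx : x ∈ (({i,j} : Finset (Fin m))ᶜ) := by simp [hxi, hxj]
  rw [gext_apply_mem i j hs τ hx]
  intro h
  apply hτ ((cEq i j hs).symm ⟨x, hx⟩)
  have h2 : cEq i j hs (τ ((cEq i j hs).symm ⟨x, hx⟩)) = ⟨x, hx⟩ := Subtype.ext h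
  have h3 := congrArg (cEq i j hs).symm h2
  rw [Equiv.symm_apply_apply] at h3
  exact h3

lemma gext_injective (i j : Fin m) (hs : (({i,j} : Finset (Fin m))ᶜ).card = k) :
    Function.Injective (gext i j hs) := fun τ τ' h => by
  ext a
  have h1 := congrArg (fun σ : Equiv.Perm (Fin m) => σ (cEq i j hs a : Fin m)) h
  rw [gext_apply_mem i j hs τ (cEq i j hs a).2, gext_apply_mem i j hs τ' (cEq i j hs a).2,
    cEq_symm_coe] at h1
  exact congrArg Fin.val ((cEq i j hs).injective (Subtype.ext h1))


lemma cEq_strictMono (i j : Fin m) (hs : (({i,j} : Finset (Fin m))ᶜ).card = k) :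
    StrictMono (fun b : Fin k => ((cEq i j hs b : Fin m))) := by
  intro a b hab
  exact ((({i,j} : Finset (Fin m))ᶜ).orderIsoOfFin hs).strictMono hab

lemma filter_gext_eq (i j : Fin m) (hij : i < j)
    (hs : (({i,j} : Finset (Fin m))ᶜ).card = k) (τ : Equiv.Perm (Fin k)) :
    Finset.univ.filter (fun a => a < gext i j hs τ a)
      = insert i ((Finset.univ.filter (fun b => b < τ b)).image
          (fun b : Fin k => ((cEq i j hs b : Fin m)))) := by
  ext a
  simp only [mem_filter, mem_univ, true_and, mem_insert, Finset.mem_image]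
  by_cases hai : a = i
  · rw [hai, gext_apply_i]
    exact iff_of_true hij (Or.inl rfl)
  by_cases haj : a = j
  · rw [haj, gext_apply_j]
    refine iff_of_false (not_lt.2 hij.le) ?_
    rintro (h | ⟨b, _, hb⟩)
    · exact (ne_of_gt hij) h
    · have hmem := (cEq i j hs b).2
      simp only [Finset.mem_compl, Finset.mem_insert, Finset.mem_singleton, not_or] at hmem
      exact hmem.2 hb
  · have ha : a ∈ (({i,j} : Finset (Fin m))ᶜ) := by
      simp only [Finset.mem_compl, Finset.mem_insert, Finset.mem_singleton, not_or]
      exact ⟨hai, haj⟩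
    rw [gext_apply_mem i j hs τ ha]
    constructor
    · intro h
      refine Or.inr ⟨(cEq i j hs).symm ⟨a, ha⟩, ?_, ?_⟩
      · have hlt := (cEq_strictMono i j hs).lt_iff_lt
          (a := (cEq i j hs).symm ⟨a, ha⟩) (b := τ ((cEq i j hs).symm ⟨a, ha⟩))
        rw [← hlt]
        have hca : ((cEq i j hs ((cEq i j hs).symm ⟨a, ha⟩) : Fin m)) = a := by
          simpa using congrArg Subtype.val ((cEq i j hs).apply_symm_apply ⟨a, ha⟩)
        rw [hca]
        exact h
      · simpa using congrArg Subtype.val ((cEq i j hs).apply_symm_apply ⟨a, ha⟩)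
    · rintro (h | ⟨b, hb, rfl⟩)
      · exact absurd h hai
      · rw [cEq_symm_coe]
        exact cEq_strictMono i j hs hb

lemma delPrincipal_apply {R : Type*} [CommRing R] (A : Matrix (Fin m) (Fin m) R)
    (s : Finset (Fin m)) (hs : sᶜ.card = k) (a b : Fin k) :
    Matrix.delPrincipal (k := k) A s a b
      = A ((sᶜ.orderIsoOfFin hs a : Fin m)) ((sᶜ.orderIsoOfFin hs b : Fin m)) := by
  rw [Matrix.delPrincipal, dif_pos hs]
  rfl

lemma prod_gext {R : Type*} [CommRing R] (A : Matrix (Fin m) (Fin m) R) (hA : A.IsSymm)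
    (i j : Fin m) (hij : i ≠ j) (hs : (({i,j} : Finset (Fin m))ᶜ).card = k)
    (τ : Equiv.Perm (Fin k)) :
    ∏ a ∈ Finset.univ.filter (fun a => a < gext i j hs τ a), A a (gext i j hs τ a)
      = A i j * ∏ b ∈ Finset.univ.filter (fun b => b < τ b),
          (Matrix.delPrincipal (k := k) A {i,j}) b (τ b) := by
  have key : ∀ (i' j' : Fin m) (hij' : i' < j') (hs' : (({i',j'} : Finset (Fin m))ᶜ).card = k),
      ∏ a ∈ Finset.univ.filter (fun a => a < gext i' j' hs' τ a), A a (gext i' j' hs' τ a)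
        = A i' j' * ∏ b ∈ Finset.univ.filter (fun b => b < τ b),
            (Matrix.delPrincipal (k := k) A {i',j'}) b (τ b) := by
    intro i' j' hij' hs'
    rw [filter_gext_eq i' j' hij' hs' τ]
    have hnotmem : i' ∉ (Finset.univ.filter (fun b => b < τ b)).image
        (fun b : Fin k => ((cEq i' j' hs' b : Fin m))) := by
      intro hmem
      obtain ⟨b, -, hb⟩ := Finset.mem_image.1 hmem
      have h2 := (cEq i' j' hs' b).2
      rw [hb] at h2
      simp at h2
    rw [Finset.prod_insert hnotmem]
    rw [gext_apply_i]
    congr 1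
    rw [Finset.prod_image (fun a _ b _ h => (cEq_strictMono i' j' hs').injective h)]
    refine Finset.prod_congr rfl fun b hb => ?_
    rw [gext_apply_mem i' j' hs' τ (cEq i' j' hs' b).2, cEq_symm_coe,
      delPrincipal_apply A {i',j'} hs']
    rfl
  rcases lt_trichotomy i j with h | h | h
  · exact key i j h hs
  · exact absurd h hij
  · have hset : ({i,j} : Finset (Fin m)) = {j,i} := Finset.pair_comm i j
    have hs₂ : (({j,i} : Finset (Fin m))ᶜ).card = k := by rw [← hset]; exact hs
    have hc : ∀ b : Fin k, ((cEq i j hs b : Fin m)) = ((cEq j i hs₂ b : Fin m)) := by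
      have hu := Finset.orderEmbOfFin_unique (s := (({j,i} : Finset (Fin m))ᶜ)) hs₂
        (f := fun b : Fin k => ((cEq i j hs b : Fin m)))
        (fun b => by rw [← hset]; exact (cEq i j hs b).2) (cEq_strictMono i j hs)
      intro b
      rw [congrFun hu b]
      rfl
    have happ : ∀ x, gext i j hs τ x = gext j i hs₂ τ x := by
      intro x
      by_cases hxi : x = i
      · rw [hxi, gext_apply_i, gext_apply_j]
      by_cases hxj : x = j
      · rw [hxj, gext_apply_j, gext_apply_i]
      have hx : x ∈ (({i,j} : Finset (Fin m))ᶜ) := by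
        simp only [Finset.mem_compl, Finset.mem_insert, Finset.mem_singleton, not_or]
        exact ⟨hxi, hxj⟩
      have hx₂ : x ∈ (({j,i} : Finset (Fin m))ᶜ) := by rw [← hset]; exact hx
      have hb : (cEq j i hs₂) ((cEq i j hs).symm ⟨x, hx⟩) = ⟨x, hx₂⟩ := by
        apply Subtype.ext
        have h1 : ((cEq i j hs ((cEq i j hs).symm ⟨x, hx⟩) : Fin m)) = x := by
          simpa using congrArg Subtype.val ((cEq i j hs).apply_symm_apply ⟨x, hx⟩)
        rw [← hc]
        exact h1
      have hbb : (cEq i j hs).symm ⟨x, hx⟩ = (cEq j i hs₂).symm ⟨x, hx₂⟩ := by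
        symm
        rw [Equiv.symm_apply_eq]
        exact hb.symm
      rw [gext_apply_mem i j hs τ hx, gext_apply_mem j i hs₂ τ hx₂, hc, hbb]
    have hsymm_eq : gext i j hs τ = gext j i hs₂ τ := Equiv.ext happ
    rw [hsymm_eq, key j i h hs₂, hA.apply i j, ← hset]

lemma hafnian_def {R : Type*} [CommRing R] (A : Matrix (Fin m) (Fin m) R) :
    A.hafnian = ∑ σ ∈ Finset.univ.filter
        (fun σ : Equiv.Perm (Fin m) => σ * σ = 1 ∧ ∀ a, σ a ≠ a),
      ∏ a ∈ Finset.univ.filter (fun a => a < σ a), A a (σ a) := rfl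

lemma sigma_mem_compl {σ : Equiv.Perm (Fin m)} (hσ : σ * σ = 1) {i j : Fin m}
    (hσi : σ i = j) {x : Fin m} (hx : x ∈ (({i,j} : Finset (Fin m))ᶜ)) :
    σ x ∈ (({i,j} : Finset (Fin m))ᶜ) := by
  have hσj : σ j = i := by rw [← hσi]; exact invol_apply hσ i
  simp only [Finset.mem_compl, Finset.mem_insert, Finset.mem_singleton, not_or] at hx ⊢
  constructor
  · intro h
    apply hx.2
    rw [← hσi, ← h, invol_apply hσ]
  · intro h
    apply hx.1
    rw [← hσj, ← h, invol_apply hσ]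

lemma exists_gext (i j : Fin m) (hij : i ≠ j) (hs : (({i,j} : Finset (Fin m))ᶜ).card = k)
    {σ : Equiv.Perm (Fin m)} (hσ : σ * σ = 1) (hfpf : ∀ a, σ a ≠ a) (hσi : σ i = j) :
    ∃ τ : Equiv.Perm (Fin k), ((τ * τ = 1 ∧ ∀ a, τ a ≠ a) ∧ gext i j hs τ = σ) := by
  have hσj : σ j = i := by rw [← hσi]; exact invol_apply hσ i
  have hmem : ∀ a : Fin k, σ ((cEq i j hs a : Fin m)) ∈ (({i,j} : Finset (Fin m))ᶜ) :=
    fun a => sigma_mem_compl hσ hσi (cEq i j hs a).2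
  set f : Fin k → Fin k :=
    fun a => (cEq i j hs).symm ⟨σ ((cEq i j hs a : Fin m)), hmem a⟩ with hf
  have hcoe : ∀ a, ((cEq i j hs (f a) : Fin m)) = σ ((cEq i j hs a : Fin m)) := by
    intro a
    rw [hf]
    exact congrArg Subtype.val ((cEq i j hs).apply_symm_apply _)
  have hinv : Function.Involutive f := by
    intro a
    have heq : (⟨σ ((cEq i j hs (f a) : Fin m)), hmem (f a)⟩ :
        {x : Fin m // x ∈ (({i,j} : Finset (Fin m))ᶜ)})
        = ⟨(cEq i j hs a : Fin m), (cEq i j hs a).2⟩ := by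
      apply Subtype.ext
      show σ ((cEq i j hs (f a) : Fin m)) = (cEq i j hs a : Fin m)
      rw [hcoe a]
      exact invol_apply hσ _
    show (cEq i j hs).symm ⟨σ ((cEq i j hs (f a) : Fin m)), hmem (f a)⟩ = a
    rw [heq]
    exact cEq_symm_coe i j hs a
  refine ⟨hinv.toPerm f, ⟨?_, ?_⟩, ?_⟩
  · apply Equiv.ext
    intro a
    exact hinv a
  · intro a h
    have h2 := hcoe a
    rw [show f a = a from h] at h2
    exact hfpf _ h2.symm
  · apply Equiv.ext
    intro x
    by_cases hxi : x = i
    · rw [hxi, gext_apply_i, hσi]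
    by_cases hxj : x = j
    · rw [hxj, gext_apply_j, hσj]
    have hx : x ∈ (({i,j} : Finset (Fin m))ᶜ) := by
      simp only [Finset.mem_compl, Finset.mem_insert, Finset.mem_singleton, not_or]
      exact ⟨hxi, hxj⟩
    rw [gext_apply_mem i j hs _ hx]
    have h1 : ((cEq i j hs ((cEq i j hs).symm ⟨x, hx⟩) : Fin m)) = x := by
      simpa using congrArg Subtype.val ((cEq i j hs).apply_symm_apply ⟨x, hx⟩)
    have h2 := hcoe ((cEq i j hs).symm ⟨x, hx⟩)
    rw [h1] at h2
    exact h2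

lemma sum_edge {R : Type*} [CommRing R] (A : Matrix (Fin m) (Fin m) R) (hA : A.IsSymm)
    (i j : Fin m) (hij : i ≠ j) (hs : (({i,j} : Finset (Fin m))ᶜ).card = k)
    (P : Equiv.Perm (Fin m) → Prop) [DecidablePred P]
    (Q : Equiv.Perm (Fin k) → Prop) [DecidablePred Q]
    (hPQ : ∀ τ : Equiv.Perm (Fin k), (τ * τ = 1 ∧ ∀ a, τ a ≠ a) →
      (P (gext i j hs τ) ↔ Q τ)) :
    ∑ σ ∈ Finset.univ.filter
        (fun σ : Equiv.Perm (Fin m) => (σ * σ = 1 ∧ ∀ a, σ a ≠ a) ∧ σ i = j ∧ P σ),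
      ∏ a ∈ Finset.univ.filter (fun a => a < σ a), A a (σ a)
    = A i j * ∑ τ ∈ Finset.univ.filter
        (fun τ : Equiv.Perm (Fin k) => (τ * τ = 1 ∧ ∀ a, τ a ≠ a) ∧ Q τ),
      ∏ b ∈ Finset.univ.filter (fun b => b < τ b),
        (Matrix.delPrincipal (k := k) A {i,j}) b (τ b) := by
  rw [Finset.mul_sum]
  symm
  refine Finset.sum_bij (fun τ _ => gext i j hs τ) ?_ ?_ ?_ ?_
  · intro τ hτ
    simp only [mem_filter, mem_univ, true_and] at hτ ⊢
    exact ⟨⟨gext_invol i j hij hs hτ.1.1, gext_fpf i j hij hs hτ.1.2⟩,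
      gext_apply_i i j hs τ, (hPQ τ hτ.1).2 hτ.2⟩
  · intro τ₁ h₁ τ₂ h₂ h
    exact gext_injective i j hs h
  · intro σ hσ
    simp only [mem_filter, mem_univ, true_and] at hσ
    obtain ⟨τ, hτ1, hτ2⟩ := exists_gext i j hij hs hσ.1.1 hσ.1.2 hσ.2.1
    refine ⟨τ, ?_, hτ2⟩
    simp only [mem_filter, mem_univ, true_and]
    exact ⟨hτ1, (hPQ τ hτ1).1 (hτ2 ▸ hσ.2.2)⟩
  · intro τ hτ
    exact (prod_gext A hA i j hij hs τ).symm


lemma delPrincipal_isSymm {R : Type*} [CommRing R] {A : Matrix (Fin m) (Fin m) R}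
    (hA : A.IsSymm) (s : Finset (Fin m)) : (Matrix.delPrincipal (k := k) A s).IsSymm := by
  unfold Matrix.delPrincipal
  split
  · ext a b
    exact hA.apply _ _
  · exact Matrix.isSymm_zero

lemma delPrincipal_comp {l : ℕ} {R : Type*} [CommRing R] (A : Matrix (Fin m) (Fin m) R)
    (s : Finset (Fin m)) (hs : sᶜ.card = k) (t : Finset (Fin k)) (ht : tᶜ.card = l) :
    Matrix.delPrincipal (k := l) (Matrix.delPrincipal (k := k) A s) t
      = Matrix.delPrincipal (k := l) A
          (s ∪ t.image (fun b => (sᶜ.orderIsoOfFin hs b : Fin m))) := by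
  set c : Fin k → Fin m := fun b => (sᶜ.orderIsoOfFin hs b : Fin m) with hc
  have hcinj : Function.Injective c := fun a b h =>
    (sᶜ.orderIsoOfFin hs).injective (Subtype.ext h)
  have hcmono : StrictMono c := fun a b h => (sᶜ.orderIsoOfFin hs).strictMono h
  have hucompl : (s ∪ t.image c)ᶜ = tᶜ.image c := by
    ext x
    simp only [Finset.mem_compl, Finset.mem_union, Finset.mem_image, not_or, not_exists]
    constructor
    · rintro ⟨hxs, hxt⟩
      have hx : x ∈ sᶜ := Finset.mem_compl.2 hxs
      refine ⟨(sᶜ.orderIsoOfFin hs).symm ⟨x, hx⟩, ?_, ?_⟩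
      · intro hmem
        exact (hxt _ ⟨hmem, congrArg Subtype.val
          ((sᶜ.orderIsoOfFin hs).apply_symm_apply ⟨x, hx⟩)⟩).elim
      · exact congrArg Subtype.val ((sᶜ.orderIsoOfFin hs).apply_symm_apply ⟨x, hx⟩)
    · rintro ⟨b, hb, rfl⟩
      refine ⟨?_, ?_⟩
      · have := (sᶜ.orderIsoOfFin hs b).2
        exact Finset.mem_compl.1 this
      · intro b' hb'
        exact hb (hcinj hb'.2 ▸ hb'.1)
  have hcard : ((s ∪ t.image c)ᶜ).card = l := by
    rw [hucompl, Finset.card_image_of_injective _ hcinj, ht]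
  ext a b
  rw [delPrincipal_apply _ _ hcard]
  rw [Matrix.delPrincipal, dif_pos ht, Matrix.submatrix_apply, delPrincipal_apply _ _ hs]
  have hmono2 : StrictMono (fun a : Fin l => c ((tᶜ.orderIsoOfFin ht a : Fin k))) :=
    fun x y h => hcmono ((tᶜ.orderIsoOfFin ht).strictMono h)
  have hmem2 : ∀ x : Fin l, c ((tᶜ.orderIsoOfFin ht x : Fin k)) ∈ (s ∪ t.image c)ᶜ := by
    intro x
    rw [hucompl]
    exact Finset.mem_image_of_mem c (tᶜ.orderIsoOfFin ht x).2
  have hu := Finset.orderEmbOfFin_unique hcard hmem2 hmono2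
  have hfa : ∀ x : Fin l, c ((tᶜ.orderIsoOfFin ht x : Fin k))
      = (((s ∪ t.image c)ᶜ).orderIsoOfFin hcard x : Fin m) := by
    intro x
    rw [congrFun hu x]
    rfl
  rw [← hfa a, ← hfa b]


lemma sum_two_edges {R : Type*} [CommRing R] (A : Matrix (Fin m) (Fin m) R) (hA : A.IsSymm)
    (i j p q : Fin m) (hij : i ≠ j) (hp : p ∉ ({i,j} : Finset (Fin m)))
    (hq : q ∉ ({i,j} : Finset (Fin m))) (hpq : p ≠ q)
    (hs : (({i,p} : Finset (Fin m))ᶜ).card = k) {l : ℕ} (hl : k = l + 2) :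
    ∑ σ ∈ Finset.univ.filter
        (fun σ : Equiv.Perm (Fin m) => (σ * σ = 1 ∧ ∀ a, σ a ≠ a) ∧ σ i = p ∧ σ j = q),
      ∏ a ∈ Finset.univ.filter (fun a => a < σ a), A a (σ a)
    = A i p * (A j q * (Matrix.delPrincipal (k := l) A {i,j,p,q}).hafnian) := by
  simp only [Finset.mem_insert, Finset.mem_singleton, not_or] at hp hq
  have hip : i ≠ p := Ne.symm hp.1
  have hjq : j ≠ q := Ne.symm hq.2
  have hj_mem : j ∈ (({i,p} : Finset (Fin m))ᶜ) := by
    simp only [Finset.mem_compl, Finset.mem_insert, Finset.mem_singleton, not_or]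
    exact ⟨hij.symm, Ne.symm hp.2⟩
  have hq_mem : q ∈ (({i,p} : Finset (Fin m))ᶜ) := by
    simp only [Finset.mem_compl, Finset.mem_insert, Finset.mem_singleton, not_or]
    exact ⟨hq.1, hpq.symm⟩
  set j' : Fin k := (cEq i p hs).symm ⟨j, hj_mem⟩ with hj'
  set q' : Fin k := (cEq i p hs).symm ⟨q, hq_mem⟩ with hq'
  have hcj : ((cEq i p hs j' : Fin m)) = j := by
    rw [hj']; simpa using congrArg Subtype.val ((cEq i p hs).apply_symm_apply ⟨j, hj_mem⟩)
  have hcq : ((cEq i p hs q' : Fin m)) = q := by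
    rw [hq']; simpa using congrArg Subtype.val ((cEq i p hs).apply_symm_apply ⟨q, hq_mem⟩)
  have hPQ : ∀ τ : Equiv.Perm (Fin k), (τ * τ = 1 ∧ ∀ a, τ a ≠ a) →
      ((gext i p hs τ) j = q ↔ τ j' = q') := by
    intro τ _
    rw [gext_apply_mem i p hs τ hj_mem, ← hj']
    constructor
    · intro h
      rw [hq', Equiv.eq_symm_apply]
      exact Subtype.ext h
    · intro h
      rw [h, hcq]
  have E1 := sum_edge A hA i p hip hs (fun σ => σ j = q) (fun τ => τ j' = q') hPQ
  rw [E1]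
  congr 1
  set B := Matrix.delPrincipal (k := k) A {i,p} with hB
  have hBsymm : B.IsSymm := delPrincipal_isSymm hA _
  have hj'q' : j' ≠ q' := by
    intro h
    exact hjq (by rw [← hcj, ← hcq, h])
  have hs2 : ((({j',q'} : Finset (Fin k))ᶜ)).card = l := by
    rw [Finset.card_compl, Finset.card_insert_of_notMem (by simpa using hj'q'),
      Finset.card_singleton, Fintype.card_fin, hl]
    omega
  have E2 := sum_edge B hBsymm j' q' hj'q' hs2 (fun _ => True) (fun _ => True)
    (fun τ _ => by simp)
  simp only [and_true] at E2
  rw [E2]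
  have hBjq : B j' q' = A j q := by
    rw [hB, delPrincipal_apply A _ hs]
    show A ((cEq i p hs j' : Fin m)) ((cEq i p hs q' : Fin m)) = A j q
    rw [hcj, hcq]
  rw [hBjq]
  congr 1
  have hcomp := delPrincipal_comp A {i,p} hs {j',q'} hs2
  have himg : ({j',q'} : Finset (Fin k)).image
      (fun b => ((({i,p} : Finset (Fin m))ᶜ).orderIsoOfFin hs b : Fin m)) = {j, q} := by
    rw [Finset.image_insert, Finset.image_singleton]
    show ({((cEq i p hs j' : Fin m)), ((cEq i p hs q' : Fin m))} : Finset (Fin m)) = {j, q}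
    rw [hcj, hcq]
  rw [himg] at hcomp
  have hset : ({i,p} : Finset (Fin m)) ∪ {j, q} = {i,j,p,q} := by
    ext x
    simp only [Finset.mem_union, Finset.mem_insert, Finset.mem_singleton]
    constructor
    · rintro ((h|h)|h|h)
      exacts [Or.inl h, Or.inr (Or.inr (Or.inl h)), Or.inr (Or.inl h),
        Or.inr (Or.inr (Or.inr h))]
    · rintro (h|h|h|h)
      exacts [Or.inl (Or.inl h), Or.inr (Or.inl h), Or.inl (Or.inr h), Or.inr (Or.inr h)]
  rw [hset] at hcomp
  rw [← hB] at hcomp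
  rw [← hcomp, hafnian_def]


lemma pair_sum {α : Type*} [LinearOrder α] [Fintype α] [DecidableEq α] {R : Type*}
    [CommRing R] (i j : α) (g : α → α → R) :
    ∑ p ∈ Finset.univ.filter (fun p => p ∉ ({i,j} : Finset α)),
      ∑ q ∈ Finset.univ.filter (fun q => q ∉ ({i,j,p} : Finset α)), g p q
    = ∑ x ∈ Finset.univ.filter (fun x : α × α =>
        x.1 < x.2 ∧ x.1 ∉ ({i,j} : Finset α) ∧ x.2 ∉ ({i,j} : Finset α)),
      (g x.1 x.2 + g x.2 x.1) := by
  set D : Finset (α × α) := Finset.univ.filter (fun x : α × α =>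
    x.1 ∉ ({i,j} : Finset α) ∧ x.2 ∉ ({i,j} : Finset α) ∧ x.1 ≠ x.2) with hD
  have step1 : ∑ x ∈ D, g x.1 x.2
      = ∑ p ∈ Finset.univ.filter (fun p => p ∉ ({i,j} : Finset α)),
        ∑ q ∈ Finset.univ.filter (fun q => q ∉ ({i,j,p} : Finset α)), g p q := by
    refine Finset.sum_finset_product' D _ _ ?_
    intro x
    rw [hD]
    simp only [Finset.mem_filter, Finset.mem_univ, true_and, Finset.mem_insert,
      Finset.mem_singleton, not_or]
    constructor
    · rintro ⟨⟨h1, h2⟩, ⟨h3, h4⟩, h5⟩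
      exact ⟨⟨h1, h2⟩, h3, h4, fun h => h5 h.symm⟩
    · rintro ⟨⟨h1, h2⟩, h3, h4, h5⟩
      exact ⟨⟨h1, h2⟩, ⟨h3, h4⟩, fun h => h5 h.symm⟩
  rw [← step1]
  rw [← Finset.sum_filter_add_sum_filter_not D (fun x : α × α => x.1 < x.2)]
  have step2 : ∑ x ∈ D.filter (fun x : α × α => ¬ x.1 < x.2), g x.1 x.2
      = ∑ x ∈ D.filter (fun x : α × α => x.1 < x.2), g x.2 x.1 := by
    refine Finset.sum_nbij' (fun x => Prod.swap x) (fun x => Prod.swap x) ?_ ?_ ?_ ?_ ?_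
    · intro x hx
      rw [hD] at hx ⊢
      simp only [Finset.mem_filter, Finset.mem_univ, true_and] at hx ⊢
      obtain ⟨⟨h1, h2, h3⟩, h4⟩ := hx
      exact ⟨⟨h2, h1, Ne.symm h3⟩, lt_of_le_of_ne (not_lt.1 h4) (Ne.symm h3)⟩
    · intro x hx
      rw [hD] at hx ⊢
      simp only [Finset.mem_filter, Finset.mem_univ, true_and] at hx ⊢
      obtain ⟨⟨h1, h2, h3⟩, h4⟩ := hx
      exact ⟨⟨h2, h1, Ne.symm h3⟩, not_lt.2 h4.le⟩
    · intro x _; exact Prod.swap_swap x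
    · intro x _; exact Prod.swap_swap x
    · intro x _; rfl
  rw [step2, ← Finset.sum_add_distrib]
  congr 1
  rw [hD]
  ext x
  simp only [Finset.mem_filter, Finset.mem_univ, true_and]
  constructor
  · rintro ⟨⟨h1, h2, _⟩, h4⟩
    exact ⟨h4, h1, h2⟩
  · rintro ⟨h4, h1, h2⟩
    exact ⟨⟨h1, h2, ne_of_lt h4⟩, h4⟩

end HafAux


open HafAux

/-- Two-row hafnian expansion: for a symmetric `2n × 2n` matrix `A` with zero
diagonal over a commutative ring and distinct indices `i ≠ j`,
`hf(A) = a_{ij}·hf(A[i,j]) + Σ_{{p,q} : p,q ∉ {i,j}, p ≠ q}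
(a_{ip}a_{jq} + a_{iq}a_{jp})·hf(A[i,j,p,q])`, the sum over unordered pairs `{p,q}`. -/
theorem hafnian_expand_two_rows {n : ℕ} {R : Type*} [CommRing R]
    (A : Matrix (Fin (2 * n + 2)) (Fin (2 * n + 2)) R)
    (hsymm : A.IsSymm) (hdiag : ∀ i, A i i = 0)
    (i j : Fin (2 * n + 2)) (hij : i ≠ j) :
    A.hafnian = A i j * (Matrix.delPrincipal (k := 2 * n) A {i, j}).hafnian +
      ∑ p ∈ Finset.univ.filter
          (fun p : Fin (2 * n + 2) × Fin (2 * n + 2) =>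
            p.1 < p.2 ∧ p.1 ∉ ({i, j} : Finset (Fin (2 * n + 2))) ∧
              p.2 ∉ ({i, j} : Finset (Fin (2 * n + 2)))),
        (A i p.1 * A j p.2 + A i p.2 * A j p.1) *
          (Matrix.delPrincipal (k := 2 * n - 2) A {i, j, p.1, p.2}).hafnian := by
  classical
  have hs1 : (({i, j} : Finset (Fin (2 * n + 2)))ᶜ).card = 2 * n := by
    rw [Finset.card_compl, Finset.card_insert_of_notMem (by simpa using hij),
      Finset.card_singleton, Fintype.card_fin]
    omega
  rw [hafnian_def]
  have hmaps : ∀ σ ∈ Finset.univ.filter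
      (fun σ : Equiv.Perm (Fin (2 * n + 2)) => σ * σ = 1 ∧ ∀ a, σ a ≠ a),
      σ i ∈ Finset.univ.filter (fun p => p ≠ i) := by
    intro σ hσ
    simp only [Finset.mem_filter, Finset.mem_univ, true_and] at hσ ⊢
    exact hσ.2 i
  rw [← Finset.sum_fiberwise_of_maps_to hmaps
    (fun σ : Equiv.Perm (Fin (2 * n + 2)) =>
      ∏ a ∈ Finset.univ.filter (fun a => a < σ a), A a (σ a))]
  have htins : (Finset.univ.filter (fun p : Fin (2 * n + 2) => p ≠ i))
      = insert j (Finset.univ.filter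
          (fun p : Fin (2 * n + 2) => p ∉ ({i, j} : Finset (Fin (2 * n + 2))))) := by
    ext p
    simp only [Finset.mem_filter, Finset.mem_univ, true_and, Finset.mem_insert,
      Finset.mem_singleton, not_or]
    constructor
    · intro hp
      by_cases hpj : p = j
      · exact Or.inl hpj
      · exact Or.inr ⟨hp, hpj⟩
    · rintro (rfl | ⟨hp, _⟩)
      · exact Ne.symm hij
      · exact hp
  rw [htins, Finset.sum_insert (by simp)]
  congr 1
  · rw [Finset.filter_filter]
    have E1 := sum_edge A hsymm i j hij hs1 (fun _ => True) (fun _ => True) (fun τ _ => Iff.rfl)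
    simp only [and_true] at E1
    rw [E1, ← hafnian_def]
  · have hsp : ∀ p ∈ Finset.univ.filter
        (fun p : Fin (2 * n + 2) => p ∉ ({i, j} : Finset (Fin (2 * n + 2)))),
        ∑ σ ∈ (Finset.univ.filter
            (fun σ : Equiv.Perm (Fin (2 * n + 2)) => σ * σ = 1 ∧ ∀ a, σ a ≠ a)).filter
            (fun σ => σ i = p),
          ∏ a ∈ Finset.univ.filter (fun a => a < σ a), A a (σ a)
        = ∑ q ∈ Finset.univ.filter
            (fun q : Fin (2 * n + 2) => q ∉ ({i, j, p} : Finset (Fin (2 * n + 2)))),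
            A i p * (A j q *
              (Matrix.delPrincipal (k := 2 * n - 2) A {i, j, p, q}).hafnian) := by
      intro p hp
      have hp2 : p ∉ ({i, j} : Finset (Fin (2 * n + 2))) := (Finset.mem_filter.1 hp).2
      have hp3 : ¬(p = i ∨ p = j) := by simpa using hp2
      push_neg at hp3
      have hip : i ≠ p := Ne.symm hp3.1
      have hpj : p ≠ j := hp3.2
      have hs_ip : (({i, p} : Finset (Fin (2 * n + 2)))ᶜ).card = 2 * n := by
        rw [Finset.card_compl, Finset.card_insert_of_notMem (by simpa using hip),
          Finset.card_singleton, Fintype.card_fin]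
        omega
      have hn : 1 ≤ n := by
        by_contra hcon
        have hn0 : n = 0 := by omega
        subst hn0
        have hij' : i ∉ ({j, p} : Finset (Fin (2 * 0 + 2))) := by
          simp only [Finset.mem_insert, Finset.mem_singleton, not_or]
          exact ⟨hij, hip⟩
        have hjp : j ∉ ({p} : Finset (Fin (2 * 0 + 2))) := by
          simp only [Finset.mem_singleton]
          exact Ne.symm hpj
        have hcard : ({i, j, p} : Finset (Fin (2 * 0 + 2))).card = 3 := by
          rw [Finset.card_insert_of_notMem hij', Finset.card_insert_of_notMem hjp,
            Finset.card_singleton]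
        have hle := Finset.card_le_univ ({i, j, p} : Finset (Fin (2 * 0 + 2)))
        rw [hcard, Fintype.card_fin] at hle
        omega
      have hl : 2 * n = (2 * n - 2) + 2 := by omega
      have hmaps2 : ∀ σ ∈ (Finset.univ.filter
          (fun σ : Equiv.Perm (Fin (2 * n + 2)) => σ * σ = 1 ∧ ∀ a, σ a ≠ a)).filter
          (fun σ => σ i = p),
          σ j ∈ Finset.univ.filter
            (fun q : Fin (2 * n + 2) => q ∉ ({i, j, p} : Finset (Fin (2 * n + 2)))) := by
        intro σ hσ
        simp only [Finset.mem_filter, Finset.mem_univ, true_and] at hσ ⊢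
        obtain ⟨⟨hinv, hfpf⟩, hσi⟩ := hσ
        simp only [Finset.mem_insert, Finset.mem_singleton, not_or]
        refine ⟨?_, hfpf j, ?_⟩
        · intro h
          have h2 := congrArg σ h
          rw [invol_apply hinv, hσi] at h2
          exact hpj h2.symm
        · intro h
          rw [← hσi] at h
          exact hij (σ.injective h.symm)
      rw [← Finset.sum_fiberwise_of_maps_to hmaps2
        (fun σ : Equiv.Perm (Fin (2 * n + 2)) =>
          ∏ a ∈ Finset.univ.filter (fun a => a < σ a), A a (σ a))]
      refine Finset.sum_congr rfl ?_
      intro q hq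
      simp only [Finset.mem_filter, Finset.mem_univ, true_and, Finset.mem_insert,
        Finset.mem_singleton, not_or] at hq
      have hq2 : q ∉ ({i, j} : Finset (Fin (2 * n + 2))) := by
        simp only [Finset.mem_insert, Finset.mem_singleton, not_or]
        exact ⟨hq.1, hq.2.1⟩
      have hpq : p ≠ q := Ne.symm hq.2.2
      have ST := sum_two_edges A hsymm i j p q hij hp2 hq2 hpq hs_ip hl
      rw [Finset.filter_filter, Finset.filter_filter]
      simp only [and_assoc] at ST ⊢
      rw [ST]
    rw [Finset.sum_congr rfl hsp]
    rw [pair_sum i j (fun p q => A i p * (A j q *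
      (Matrix.delPrincipal (k := 2 * n - 2) A {i, j, p, q}).hafnian))]
    refine Finset.sum_congr rfl ?_
    intro x hx
    simp only [Finset.pair_comm x.2 x.1]
    ring
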